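/- If n ≡ 2 (mod 3) and n ≥ 5, then the number of minimum dominating sets of the cycle C_n equals n. -/

import Mathlib

open Finset SimpleGraph

/-- `S` is a dominating set of `G`: every vertex outside `S` has a neighbor in `S`. -/
def domSet {V : Type*} (G : SimpleGraph V) (S : Finset V) : Prop :=
  ∀ v, v ∉ S → ∃ u ∈ S, G.Adj u v

/-- The domination number `γ(G)`: least cardinality of a dominating set. -/
noncomputable def domNum {V : Type*} [Fintype V] (G : SimpleGraph V) : ℕ :=
  sInf {k | ∃ S : Finset V, domSet G S ∧ S.card = k}

/-- The dominion `ζ(G)`: the number of dominating sets of minimum cardinality. -/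
noncomputable def dominion {V : Type*} [Fintype V] (G : SimpleGraph V) : ℕ :=
  Nat.card {S : Finset V // domSet G S ∧ S.card = domNum G}

namespace Stmt13

open Fin.CommRing Fin.NatCast

variable {k : ℕ}

abbrev V (k : ℕ) := Fin (3*k+2)

lemma one_ne_zero' (k : ℕ) : (1 : V k) ≠ 0 := by
  intro h
  have := congrArg Fin.val h
  simp [Fin.val_one] at this

lemma two_ne_zero' (hk : 1 ≤ k) : (2 : V k) ≠ 0 := by
  intro h
  have : ((2:ℕ) : V k) = 0 := by push_cast; exact h
  have := congrArg Fin.val this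
  rw [Fin.val_natCast] at this
  rw [Nat.mod_eq_of_lt (by omega)] at this
  simp at this

lemma cast_inj' {i j : ℕ} (hi : i < 3*k+2) (hj : j < 3*k+2)
    (h : ((i:ℕ) : V k) = ((j:ℕ) : V k)) : i = j := by
  have := congrArg Fin.val h
  rwa [Fin.val_natCast, Fin.val_natCast, Nat.mod_eq_of_lt hi, Nat.mod_eq_of_lt hj] at this

lemma adj_iff {u v : V k} : (cycleGraph (3*k+2)).Adj u v ↔ v = u + 1 ∨ v = u - 1 := by
  rw [cycleGraph_adj]
  constructor
  · rintro (h|h)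
    · right; linear_combination -h
    · left; linear_combination h
  · rintro (h|h)
    · right; linear_combination h
    · left; linear_combination -h

def Sa (a : V k) : Finset (V k) := (Finset.range (k+1)).image (fun i => a + ((3*i : ℕ) : V k))

lemma mem_Sa {a v : V k} : v ∈ Sa a ↔ ∃ i ≤ k, v = a + ((3*i : ℕ) : V k) := by
  simp only [Sa, mem_image, mem_range]
  constructor
  · rintro ⟨i, hi, rfl⟩; exact ⟨i, by omega, rfl⟩
  · rintro ⟨i, hi, rfl⟩; exact ⟨i, by omega, rfl⟩

lemma card_Sa (a : V k) : (Sa a).card = k + 1 := by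
  rw [Sa, card_image_of_injOn, card_range]
  intro i hi j hj h
  simp only [mem_coe, mem_range] at hi hj
  have h' : ((3*i : ℕ) : V k) = ((3*j : ℕ) : V k) := by
    have := add_left_cancel h
    exact this
  have := cast_inj' (by omega) (by omega) h'
  omega

lemma dom_Sa (a : V k) : domSet (cycleGraph (3*k+2)) (Sa a) := by
  intro v hv
  set t := (v - a).val with ht
  have htlt : t < 3*k+2 := (v - a).isLt
  have hv' : v = a + ((t : ℕ) : V k) := by
    rw [ht, Fin.cast_val_eq_self]; ring
  have hcase : t % 3 = 0 ∨ t % 3 = 1 ∨ t % 3 = 2 := by omega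
  rcases hcase with h0 | h1 | h2
  · exfalso
    apply hv
    rw [mem_Sa]
    refine ⟨t/3, by omega, ?_⟩
    rw [hv']
    congr 2
    omega
  · obtain ⟨q, hq, hqk⟩ : ∃ q, t = 3*q+1 ∧ q ≤ k := ⟨t/3, by omega, by omega⟩
    rw [hq] at hv'
    refine ⟨a + ((3*q : ℕ) : V k), mem_Sa.mpr ⟨q, hqk, rfl⟩, ?_⟩
    rw [adj_iff]
    left
    rw [hv']
    push_cast
    ring
  · obtain ⟨q, hq, hqk⟩ : ∃ q, t = 3*q+2 ∧ q + 1 ≤ k := ⟨t/3, by omega, by omega⟩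
    rw [hq] at hv'
    refine ⟨a + ((3*(q+1) : ℕ) : V k), mem_Sa.mpr ⟨q+1, hqk, rfl⟩, ?_⟩
    rw [adj_iff]
    right
    rw [hv']
    push_cast
    ring

lemma lower_bound {S : Finset (V k)} (hS : domSet (cycleGraph (3*k+2)) S) :
    3*k+2 ≤ 3 * S.card := by
  have hsub : (univ : Finset (V k)) ⊆ S.biUnion (fun u => {u-1, u, u+1}) := by
    intro v _
    by_cases hv : v ∈ S
    · exact mem_biUnion.mpr ⟨v, hv, by simp⟩
    · obtain ⟨u, hu, hadj⟩ := hS v hv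
      rw [adj_iff] at hadj
      refine mem_biUnion.mpr ⟨u, hu, ?_⟩
      rcases hadj with h | h <;> simp [h]
  have h1 : (univ : Finset (V k)).card ≤ (S.biUnion (fun u => {u-1, u, u+1})).card :=
    card_le_card hsub
  have h2 : (S.biUnion (fun u => {u-1, u, u+1})).card ≤ ∑ u ∈ S, ({u-1, u, u+1} : Finset (V k)).card :=
    card_biUnion_le
  have h3 : ∑ u ∈ S, ({u-1, u, u+1} : Finset (V k)).card ≤ ∑ u ∈ S, 3 := by
    apply sum_le_sum
    intro u _
    have a := card_insert_le (u-1) ({u, u+1} : Finset (V k))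
    have b := card_insert_le u ({u+1} : Finset (V k))
    simp only [card_singleton] at *
    omega
  simp only [sum_const, smul_eq_mul, card_univ, Fintype.card_fin] at h1 h2 h3 ⊢
  omega

lemma domNum_eq : domNum (cycleGraph (3*k+2)) = k + 1 := by
  apply le_antisymm
  · exact Nat.sInf_le ⟨Sa 0, dom_Sa 0, card_Sa 0⟩
  · apply le_csInf
    · exact ⟨k+1, Sa 0, dom_Sa 0, card_Sa 0⟩
    rintro m ⟨S, hd, rfl⟩
    have := lower_bound hd
    omega

def N (v : V k) : Finset (V k) := {v-1, v, v+1}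

lemma mem_N {u v : V k} : u ∈ N v ↔ u = v - 1 ∨ u = v ∨ u = v + 1 := by simp [N]

def c (S : Finset (V k)) (v : V k) : ℕ := (S ∩ N v).card

lemma add_one_ne (u : V k) : u + 1 ≠ u := by
  intro h
  exact one_ne_zero' k (by linear_combination h)

lemma add_one_ne_sub_one (hk : 1 ≤ k) (u : V k) : u + 1 ≠ u - 1 := by
  intro h
  exact two_ne_zero' hk (by linear_combination h)

lemma self_ne_sub_one (u : V k) : u ≠ u - 1 := by
  intro h
  exact one_ne_zero' k (by linear_combination h)

lemma c_pos {S : Finset (V k)} (hS : domSet (cycleGraph (3*k+2)) S) (v : V k) : 1 ≤ c S v := by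
  apply card_pos.mpr
  by_cases hv : v ∈ S
  · exact ⟨v, mem_inter.mpr ⟨hv, mem_N.mpr (Or.inr (Or.inl rfl))⟩⟩
  · obtain ⟨u, hu, hadj⟩ := hS v hv
    rw [adj_iff] at hadj
    rcases hadj with h | h
    · exact ⟨u, mem_inter.mpr ⟨hu, mem_N.mpr (Or.inl (by linear_combination -h))⟩⟩
    · exact ⟨u, mem_inter.mpr ⟨hu, mem_N.mpr (Or.inr (Or.inr (by linear_combination -h)))⟩⟩

lemma sum_c (hk : 1 ≤ k) (S : Finset (V k)) : ∑ v, c S v = 3 * S.card := by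
  have step1 : ∀ v : V k, c S v = ∑ u ∈ S, if u ∈ N v then 1 else 0 := by
    intro v
    rw [c, ← filter_mem_eq_inter, card_filter]
  calc ∑ v, c S v = ∑ v : V k, ∑ u ∈ S, if u ∈ N v then 1 else 0 :=
        Finset.sum_congr rfl (fun v _ => step1 v)
    _ = ∑ u ∈ S, ∑ v : V k, if u ∈ N v then 1 else 0 := Finset.sum_comm
    _ = ∑ u ∈ S, 3 := by
        apply Finset.sum_congr rfl
        intro u _
        rw [← card_filter]
        have hfe : (univ.filter (fun v => u ∈ N v)) = {u+1, u, u-1} := by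
          ext v
          simp only [mem_filter, mem_univ, true_and, mem_N, mem_insert, mem_singleton]
          constructor
          · rintro (h|h|h)
            · left; linear_combination -h
            · right; left; linear_combination -h
            · right; right; linear_combination -h
          · rintro (h|h|h)
            · left; linear_combination -h
            · right; left; linear_combination -h
            · right; right; linear_combination -h
        rw [hfe]
        rw [card_insert_of_notMem, card_insert_of_notMem, card_singleton]
        · simp only [mem_singleton]
          exact self_ne_sub_one u
        · simp only [mem_insert, mem_singleton]
          push_neg
          exact ⟨add_one_ne u, add_one_ne_sub_one hk u⟩
    _ = 3 * S.card := by rw [sum_const, smul_eq_mul, mul_comm]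

lemma double_unique (hk : 1 ≤ k) {S : Finset (V k)} (hcard : S.card = k+1)
    (hdom : domSet (cycleGraph (3*k+2)) S) {v w : V k}
    (hv : 2 ≤ c S v) (hw : 2 ≤ c S w) : v = w := by
  by_contra hne
  have hsub : ({v, w} : Finset (V k)) ⊆ univ := subset_univ _
  have hsd := Finset.sum_sdiff (f := c S) hsub
  have h1 : ∑ x ∈ ({v, w} : Finset (V k)), c S x = c S v + c S w := sum_pair hne
  have h3 : (univ \ ({v, w} : Finset (V k))).card = 3*k := by
    rw [card_sdiff_of_subset hsub, card_pair hne, card_univ, Fintype.card_fin]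
    omega
  have h2 : 3*k ≤ ∑ x ∈ univ \ {v, w}, c S x := by
    have := card_nsmul_le_sum (univ \ ({v, w} : Finset (V k))) (c S) 1 (fun x _ => c_pos hdom x)
    rwa [h3, smul_eq_mul, mul_one] at this
  have h4 := sum_c hk S
  rw [hcard] at h4
  rw [h1] at hsd
  omega

lemma no_adj (hk : 1 ≤ k) {S : Finset (V k)} (hcard : S.card = k+1)
    (hdom : domSet (cycleGraph (3*k+2)) S) {u : V k} (hu : u ∈ S) (hu1 : u + 1 ∈ S) : False := by
  have hne : u ≠ u + 1 := (add_one_ne u).symm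
  have h1 : 2 ≤ c S u := by
    have hsub : ({u, u+1} : Finset (V k)) ⊆ S ∩ N u := by
      intro x hx
      rcases mem_insert.mp hx with rfl | hx
      · exact mem_inter.mpr ⟨hu, mem_N.mpr (Or.inr (Or.inl rfl))⟩
      · rw [mem_singleton] at hx; subst hx
        exact mem_inter.mpr ⟨hu1, mem_N.mpr (Or.inr (Or.inr rfl))⟩
    calc 2 = ({u, u+1} : Finset (V k)).card := (card_pair hne).symm
      _ ≤ _ := card_le_card hsub
  have h2 : 2 ≤ c S (u+1) := by
    have hsub : ({u, u+1} : Finset (V k)) ⊆ S ∩ N (u+1) := by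
      intro x hx
      rcases mem_insert.mp hx with rfl | hx
      · exact mem_inter.mpr ⟨hu, mem_N.mpr (Or.inl (by ring))⟩
      · rw [mem_singleton] at hx; subst hx
        exact mem_inter.mpr ⟨hu1, mem_N.mpr (Or.inr (Or.inl rfl))⟩
    calc 2 = ({u, u+1} : Finset (V k)).card := (card_pair hne).symm
      _ ≤ _ := card_le_card hsub
  exact hne (double_unique hk hcard hdom h1 h2)

lemma exists_pair (hk : 1 ≤ k) {S : Finset (V k)} (hcard : S.card = k+1)
    (hdom : domSet (cycleGraph (3*k+2)) S) : ∃ b, b ∈ S ∧ b + 2 ∈ S := by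
  have hex : ∃ v, 2 ≤ c S v := by
    by_contra h
    push_neg at h
    have hle : ∑ v, c S v ≤ 3*k+2 := by
      have := Finset.sum_le_card_nsmul univ (c S) 1 (fun v _ => by have := h v; omega)
      rwa [card_univ, Fintype.card_fin, smul_eq_mul, mul_one] at this
    have h4 := sum_c hk S
    rw [hcard] at h4
    omega
  obtain ⟨v, hv⟩ := hex
  obtain ⟨x, hx, y, hy, hxy⟩ := Finset.one_lt_card.mp hv
  obtain ⟨hxS, hxN⟩ := mem_inter.mp hx
  obtain ⟨hyS, hyN⟩ := mem_inter.mp hy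
  rcases mem_N.mp hxN with rfl | rfl | rfl <;> rcases mem_N.mp hyN with rfl | rfl | rfl
  · exact absurd rfl hxy
  · exact absurd (no_adj hk hcard hdom hxS (by rwa [sub_add_cancel])) id
  · exact ⟨v - 1, hxS, by rwa [show v - 1 + 2 = v + 1 by ring]⟩
  · exact absurd (no_adj hk hcard hdom hyS (by rwa [sub_add_cancel])) id
  · exact absurd rfl hxy
  · exact absurd (no_adj hk hcard hdom hxS hyS) id
  · exact ⟨v - 1, hyS, by rwa [show v - 1 + 2 = v + 1 by ring]⟩
  · exact absurd (no_adj hk hcard hdom hyS hxS) id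
  · exact absurd rfl hxy

lemma pair_unique (hk : 1 ≤ k) {S : Finset (V k)} (hcard : S.card = k+1)
    (hdom : domSet (cycleGraph (3*k+2)) S) {b b' : V k}
    (hb1 : b ∈ S) (hb2 : b + 2 ∈ S) (hb1' : b' ∈ S) (hb2' : b' + 2 ∈ S) : b = b' := by
  have hpair : ∀ d : V k, d ∈ S → d + 2 ∈ S → 2 ≤ c S (d + 1) := by
    intro d hd hd2
    have hne : d ≠ d + 2 := by
      intro h
      exact two_ne_zero' hk (left_eq_add.mp h)
    have hsub : ({d, d+2} : Finset (V k)) ⊆ S ∩ N (d+1) := by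
      intro x hx
      rcases mem_insert.mp hx with rfl | hx
      · exact mem_inter.mpr ⟨hd, mem_N.mpr (Or.inl (by ring))⟩
      · rw [mem_singleton] at hx; subst hx
        exact mem_inter.mpr ⟨hd2, mem_N.mpr (Or.inr (Or.inr (by ring)))⟩
    calc 2 = ({d, d+2} : Finset (V k)).card := (card_pair hne).symm
      _ ≤ _ := card_le_card hsub
  have h := double_unique hk hcard hdom (hpair b hb1 hb2) (hpair b' hb1' hb2')
  exact add_right_cancel h

lemma eq_Sa (hk : 1 ≤ k) {S : Finset (V k)} (hcard : S.card = k+1)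
    (hdom : domSet (cycleGraph (3*k+2)) S) {b : V k}
    (hb1 : b ∈ S) (hb2 : b + 2 ∈ S) : S = Sa (b+2) := by
  have key : ∀ i, i ≤ k → b + 2 + ((3*i : ℕ) : V k) ∈ S := by
    intro i
    induction i with
    | zero => intro _; simpa using hb2
    | succ i ih =>
      intro hik
      have hu : b + 2 + ((3*i : ℕ) : V k) ∈ S := ih (by omega)
      set u := b + 2 + ((3*i : ℕ) : V k) with hu_def
      have h1 : u + 1 ∉ S := fun h => no_adj hk hcard hdom hu h
      have h2 : u + 2 ∉ S := by
        intro h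
        have heq : u = b := pair_unique hk hcard hdom hu h hb1 hb2
        rw [hu_def] at heq
        have h3 : ((3*i+2 : ℕ) : V k) = 0 := by
          push_cast at heq ⊢
          linear_combination heq
        have h4 := congrArg Fin.val h3
        rw [Fin.val_natCast] at h4
        rw [Nat.mod_eq_of_lt (by omega)] at h4
        simp at h4
      obtain ⟨w, hw, hadj⟩ := hdom (u+2) h2
      rw [adj_iff] at hadj
      rcases hadj with h | h
      · have hw1 : w = u + 1 := by linear_combination -h
        rw [hw1] at hw
        exact (h1 hw).elim
      · have hw3 : w = u + 3 := by linear_combination -h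
        rw [hw3] at hw
        have he : u + 3 = b + 2 + ((3*(i+1) : ℕ) : V k) := by
          rw [hu_def]; push_cast; ring
        rwa [he] at hw
  have hsub : Sa (b+2) ⊆ S := by
    intro v hv
    obtain ⟨i, hi, rfl⟩ := mem_Sa.mp hv
    exact key i hi
  exact (eq_of_subset_of_card_le hsub (by rw [hcard, card_Sa])).symm

lemma pair_mem_Sa (a : V k) : (a - 2) ∈ Sa a ∧ (a - 2) + 2 ∈ Sa a := by
  have h0 : ((3*k+2 : ℕ) : V k) = 0 := by simp
  have h : ((3*k : ℕ) : V k) = -2 := by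
    push_cast at h0 ⊢
    linear_combination h0
  constructor
  · apply mem_Sa.mpr ⟨k, le_refl k, ?_⟩
    rw [h]; ring
  · have he : a - 2 + 2 = a := by ring
    rw [he]
    exact mem_Sa.mpr ⟨0, Nat.zero_le k, by simp⟩

lemma main (hk : 1 ≤ k) : dominion (cycleGraph (3*k+2)) = 3*k+2 := by
  classical
  have hdn := domNum_eq (k := k)
  let f : Fin (3*k+2) → {S : Finset (V k) // domSet (cycleGraph (3*k+2)) S ∧
      S.card = domNum (cycleGraph (3*k+2))} :=
    fun a => ⟨Sa a, dom_Sa a, by rw [card_Sa, hdn]⟩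
  have hbij : Function.Bijective f := by
    constructor
    · intro a a' h
      have hSS : Sa a = Sa a' := congrArg Subtype.val h
      have p1 := pair_mem_Sa a
      have p2 := pair_mem_Sa a'
      rw [← hSS] at p2
      have h2 := pair_unique hk (card_Sa a) (dom_Sa a) p1.1 p1.2 p2.1 p2.2
      linear_combination h2
    · rintro ⟨S, hd, hc⟩
      rw [hdn] at hc
      obtain ⟨b, hb1, hb2⟩ := exists_pair hk hc hd
      exact ⟨b + 2, Subtype.ext (eq_Sa hk hc hd hb1 hb2).symm⟩
  rw [dominion, ← Nat.card_eq_of_bijective f hbij]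
  simp [Nat.card_eq_fintype_card]

end Stmt13

theorem stmt13 (n : ℕ) (hn : 5 ≤ n) (hmod : n % 3 = 2) :
    dominion (cycleGraph n) = n := by
  obtain ⟨k, hk, rfl⟩ : ∃ k, 1 ≤ k ∧ n = 3*k+2 := ⟨(n-2)/3, by omega, by omega⟩
  exact Stmt13.main hk
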